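/- Let p > 3 be a prime and let A, B be integers with p ∤ B and with A² − 4B a nonzero quadratic residue modulo p (i.e., the Legendre symbol ((A²−4B)/p) = 1). Then for every natural number n, the rational number ∑_{k=0}^{p-1} (1 − B^{−k})·v_k(A,B)·H_k^n is congruent to 0 modulo p. -/

import Mathlib

/-- The companion Lucas sequence `v_n(A,B)`. -/
def lucasV (A B : ℤ) : ℕ → ℤ
  | 0 => 2
  | 1 => A
  | n + 2 => A * lucasV A B (n + 1) - B * lucasV A B n

/-- `x ≡ y (mod p^m)` for rational numbers: `x - y = p^m * r` with `p ∤ den r`. -/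
def ratCong (p m : ℕ) (x y : ℚ) : Prop :=
  ∃ r : ℚ, x - y = (p : ℚ) ^ m * r ∧ ¬ (p ∣ r.den)

/-- Reduction: if `x * d = c` with `p ∤ d` and `p ∣ c`, then `x ≡ 0 (mod p)`. -/
lemma ratCong_of_dvd (p : ℕ) (hp : p.Prime) (x : ℚ) (d c : ℤ)
    (hd : ¬ (p : ℤ) ∣ d) (hxd : x * (d : ℚ) = (c : ℚ)) (hc : (p : ℤ) ∣ c) :
    ratCong p 1 x 0 := by
  have hd0 : d ≠ 0 := by rintro rfl; exact hd (dvd_zero _)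
  have hdQ : (d : ℚ) ≠ 0 := Int.cast_ne_zero.mpr hd0
  obtain ⟨e, rfl⟩ := hc
  refine ⟨(e : ℚ) / (d : ℚ), ?_, ?_⟩
  · rw [sub_zero, pow_one]
    field_simp at hxd ⊢
    push_cast at hxd
    linarith [hxd]
  · intro hpd
    apply hd
    have : ((e : ℚ) / (d : ℚ)) = Rat.divInt e d := (Rat.divInt_eq_div e d).symm
    have hdvd : (((Rat.divInt e d).den : ℤ)) ∣ d := Rat.den_dvd e d
    rw [← this] at hdvd
    exact dvd_trans (Int.natCast_dvd_natCast.mpr hpd) hdvd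

/-- Partial sums of inverses in `ZMod p`. -/
def gsum (p k : ℕ) : ZMod p := ∑ i ∈ Finset.range k, ((i : ZMod p) + 1)⁻¹

lemma gsum_ident (p k : ℕ) [Fact p.Prime] (hk : k ≤ p - 1) :
    gsum p (p - 1) = gsum p (p - 1 - k) - gsum p k := by
  have hp1 : 1 ≤ p := (Fact.out : p.Prime).one_lt.le
  have h1 : gsum p (p-1-k) + ∑ i ∈ Finset.Ico (p-1-k) (p-1), ((i : ZMod p) + 1)⁻¹
      = gsum p (p-1) := by
    rw [gsum, gsum, Finset.range_eq_Ico, Finset.range_eq_Ico]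
    exact Finset.sum_Ico_consecutive _ (Nat.zero_le _) (Nat.sub_le _ _)
  have h2 : ∑ i ∈ Finset.Ico (p-1-k) (p-1), ((i : ZMod p) + 1)⁻¹
      = ∑ i ∈ Finset.range k, ((((p-1-k) + i : ℕ) : ZMod p) + 1)⁻¹ := by
    rw [Finset.sum_Ico_eq_sum_range, Nat.sub_sub_self hk]
  have h3 : ∀ i ∈ Finset.range k,
      ((((p-1-k) + i : ℕ) : ZMod p) + 1)⁻¹ = ((i : ZMod p) - (k : ZMod p))⁻¹ := by
    intro i hi
    have heq : (p-1-k) + i + 1 = (p - k) + i := by omega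
    have hcast : (((p-1-k) + i : ℕ) : ZMod p) + 1 = (((p - k) + i : ℕ) : ZMod p) := by
      rw [← heq]; push_cast; ring
    rw [hcast]
    congr 1
    rw [Nat.cast_add, Nat.cast_sub (by omega : k ≤ p), ZMod.natCast_self]
    ring
  have h4 : ∑ i ∈ Finset.range k, ((i : ZMod p) - (k : ZMod p))⁻¹ = - gsum p k := by
    rw [← Finset.sum_range_reflect (fun i => ((i : ZMod p) - (k : ZMod p))⁻¹) k, gsum,
      ← Finset.sum_neg_distrib]
    refine Finset.sum_congr rfl fun i hi => ?_
    have hi' : i < k := Finset.mem_range.mp hi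
    have : ((k - 1 - i : ℕ) : ZMod p) = (k : ZMod p) - ((i : ZMod p) + 1) := by
      have he : k - 1 - i = k - (i+1) := by omega
      rw [he, Nat.cast_sub (by omega)]; push_cast; ring
    simp only [this]
    rw [show (k : ZMod p) - ((i : ZMod p)+1) - (k : ZMod p) = -((i : ZMod p)+1) by ring, inv_neg]
  rw [← h1, h2, Finset.sum_congr rfl h3, h4]
  ring

lemma gsum_p1 (p : ℕ) [Fact p.Prime] (hp2 : 2 < p) : gsum p (p - 1) = 0 := by
  have h := gsum_ident p (p-1) le_rfl
  rw [Nat.sub_self] at h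
  have h0 : gsum p 0 = 0 := by simp [gsum]
  rw [h0, zero_sub] at h
  have h2 : (2 : ZMod p) * gsum p (p-1) = 0 := by linear_combination h
  have hne : (2 : ZMod p) ≠ 0 := by
    have : ((2:ℕ) : ZMod p) ≠ 0 := by
      rw [Ne, ZMod.natCast_eq_zero_iff]
      intro hdvd
      exact absurd (Nat.le_of_dvd two_pos hdvd) (by omega)
    simpa using this
  rcases mul_eq_zero.mp h2 with h | h
  · exact absurd h hne
  · exact h

lemma gsum_reflect (p k : ℕ) [Fact p.Prime] (hp2 : 2 < p) (hk : k < p) :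
    gsum p (p - 1 - k) = gsum p k := by
  by_cases hk1 : k ≤ p - 1
  · have := gsum_ident p k hk1
    rw [gsum_p1 p hp2] at this
    linear_combination -this
  · omega

/-- The Lucas companion sequence splits over roots of `x^2 - A x + B`. -/
lemma lucasV_cast (p : ℕ) (A B : ℤ) (α β : ZMod p) (hsum : α + β = (A : ZMod p))
    (hprod : α * β = (B : ZMod p)) :
    ∀ k, ((lucasV A B k : ℤ) : ZMod p) = α ^ k + β ^ k
  | 0 => by norm_num [lucasV]
  | 1 => by simpa [lucasV] using hsum.symm
  | (k+2) => by
    show ((A * lucasV A B (k+1) - B * lucasV A B k : ℤ) : ZMod p) = _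
    push_cast
    rw [lucasV_cast p A B α β hsum hprod (k+1), lucasV_cast p A B α β hsum hprod k,
      ← hsum, ← hprod]
    ring

theorem stmt6 (p : ℕ) [Fact p.Prime] (hp3 : 3 < p) (A B : ℤ) (hB : ¬ ((p : ℤ) ∣ B))
    (hD : legendreSym p (A ^ 2 - 4 * B) = 1) (n : ℕ) :
    ratCong p 1
      (∑ k ∈ Finset.range p,
        (1 - (B : ℚ) ^ (-(k : ℤ))) * (lucasV A B k : ℚ) * harmonic k ^ n) 0 := by
  have hp : p.Prime := Fact.out
  set F : ℕ := (p-1).factorial with hF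
  set D : ℕ → ℤ := fun k => ∑ i ∈ Finset.range k, ((F / (i+1) : ℕ) : ℤ) with hDdef
  set c : ℤ := ∑ k ∈ Finset.range p,
    (B^(p-1) - B^(p-1-k)) * lucasV A B k * (D k)^n with hcdef
  apply ratCong_of_dvd p hp _ (B^(p-1) * (F : ℤ)^n) c
  · -- p does not divide the denominator
    intro hdvd
    rcases (Int.Prime.dvd_mul' hp hdvd) with h | h
    · exact hB ((Nat.prime_iff_prime_int.mp hp).dvd_of_dvd_pow h)
    · have : (p : ℤ) ∣ (F : ℤ) := (Nat.prime_iff_prime_int.mp hp).dvd_of_dvd_pow h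
      have : p ∣ F := Int.ofNat_dvd.mp this
      rw [hF, hp.dvd_factorial] at this
      omega
  · -- x * d = c
    rw [Finset.sum_mul, hcdef]
    push_cast
    refine Finset.sum_congr rfl fun k hk => ?_
    have hk' : k < p := Finset.mem_range.mp hk
    have hBQ : (B : ℚ) ≠ 0 := Int.cast_ne_zero.mpr (fun h => hB (h ▸ dvd_zero _))
    have c1 : (1 - (B : ℚ) ^ (-(k:ℤ))) * (B : ℚ)^(p-1) = (B:ℚ)^(p-1) - (B:ℚ)^(p-1-k) := by
      have hz : (B:ℚ)^(-(k:ℤ)) * (B:ℚ)^(p-1) = (B:ℚ)^(p-1-k) := by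
        rw [show (B:ℚ)^(p-1) = (B:ℚ)^(((p-1 : ℕ)):ℤ) from (zpow_natCast _ _).symm,
            show (B:ℚ)^(p-1-k) = (B:ℚ)^(((p-1-k : ℕ)):ℤ) from (zpow_natCast _ _).symm,
            ← zpow_add₀ hBQ]
        congr 1
        omega
      rw [sub_mul, one_mul, hz]
    have c2 : (harmonic k : ℚ) * (F : ℚ) = ((D k : ℤ) : ℚ) := by
      rw [harmonic, Finset.sum_mul]
      simp only [hDdef, Int.cast_sum, Int.cast_natCast]
      refine Finset.sum_congr rfl fun i hi => ?_
      have hii : i < k := Finset.mem_range.mp hi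
      have hdvd : (i+1) ∣ F := Nat.dvd_factorial (Nat.succ_pos i) (by omega)
      rw [Nat.cast_div hdvd (by positivity : ((i+1 : ℕ) : ℚ) ≠ 0)]
      push_cast
      field_simp
    calc (1 - (B : ℚ) ^ (-(k:ℤ))) * (lucasV A B k : ℚ) * harmonic k ^ n
          * ((B:ℚ)^(p-1) * (F:ℚ)^n)
        = ((1 - (B : ℚ) ^ (-(k:ℤ))) * (B:ℚ)^(p-1)) * (lucasV A B k : ℚ)
          * ((harmonic k : ℚ) * (F:ℚ))^n := by ring
      _ = ((B:ℚ)^(p-1) - (B:ℚ)^(p-1-k)) * (lucasV A B k : ℚ) * ((D k : ℤ) : ℚ)^n := by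
          rw [c1, c2]
  · -- p ∣ c
    rw [← ZMod.intCast_zmod_eq_zero_iff_dvd]
    set K := ZMod p
    set b : K := ((B : ℤ) : K) with hbdef
    have hb : b ≠ 0 := by
      rw [hbdef, Ne, ZMod.intCast_zmod_eq_zero_iff_dvd]; exact hB
    -- find the roots
    have hD0 : ((A^2 - 4*B : ℤ) : K) ≠ 0 := by
      intro h
      have := (legendreSym.eq_zero_iff p _).mpr h
      rw [hD] at this
      exact one_ne_zero this
    obtain ⟨s, hs⟩ := (legendreSym.eq_one_iff p hD0).mp hD
    have h2 : (2 : K) ≠ 0 := by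
      have : ((2:ℕ) : ZMod p) ≠ 0 := by
        rw [Ne, ZMod.natCast_eq_zero_iff]
        intro hdvd
        exact absurd (Nat.le_of_dvd two_pos hdvd) (by omega)
      simpa using this
    set α : K := ((A : K) + s) / 2 with hαdef
    set β : K := ((A : K) - s) / 2 with hβdef
    have h4 : (4 : K) ≠ 0 := by
      have h44 : (4 : K) = 2 * 2 := by norm_num
      rw [h44]
      exact mul_ne_zero h2 h2
    have hsum : α + β = (A : K) := by
      rw [hαdef, hβdef, ← add_div,
        show (A : K) + s + ((A : K) - s) = 2 * (A : K) by ring]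
      exact mul_div_cancel_left₀ _ h2
    have hs' : s * s = (A : K)^2 - 4*b := by
      push_cast at hs
      rw [hbdef]
      push_cast
      linear_combination -hs
    have hprod : α * β = b := by
      rw [hαdef, hβdef, div_mul_div_comm, show (2 : K) * 2 = 4 by norm_num,
        div_eq_iff h4]
      linear_combination -hs'
    have hα : α ≠ 0 := by
      intro h; rw [h, zero_mul] at hprod; exact hb hprod.symm
    have hβ : β ≠ 0 := by
      intro h; rw [h, mul_zero] at hprod; exact hb hprod.symm
    have hLv := lucasV_cast p A B α β hsum (hbdef ▸ hprod)
    -- the key vanishing sum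
    have hT : ∀ t : K, t ≠ 0 →
        (∑ k ∈ Finset.range p, (t^k - (t⁻¹)^k) * (gsum p k)^n) = 0 := by
      intro t ht
      have hrefl : ∀ k ∈ Finset.range p,
          (t^(p-1-k) - (t⁻¹)^(p-1-k)) * gsum p (p-1-k) ^ n
          = -((t^k - (t⁻¹)^k) * gsum p k ^ n) := by
        intro k hk
        have hk' : k < p := Finset.mem_range.mp hk
        have h1 : t^(p-1-k) = (t⁻¹)^k := by
          have hm : t^(p-1-k) * t^k = 1 := by
            rw [← pow_add, Nat.sub_add_cancel (by omega)]
            exact ZMod.pow_card_sub_one_eq_one ht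
          rw [inv_pow]
          exact eq_inv_of_mul_eq_one_left hm
        have h2' : (t⁻¹)^(p-1-k) = t^k := by
          have ht' : t⁻¹ ≠ 0 := inv_ne_zero ht
          have hm : (t⁻¹)^(p-1-k) * (t⁻¹)^k = 1 := by
            rw [← pow_add, Nat.sub_add_cancel (by omega)]
            exact ZMod.pow_card_sub_one_eq_one ht'
          rw [eq_inv_of_mul_eq_one_left hm, inv_pow, inv_inv]
        rw [h1, h2', gsum_reflect p k (by omega) hk']
        ring
      have hS : (∑ k ∈ Finset.range p, (t^k - (t⁻¹)^k) * (gsum p k)^n)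
          = - ∑ k ∈ Finset.range p, (t^k - (t⁻¹)^k) * (gsum p k)^n := by
        conv_lhs => rw [← Finset.sum_range_reflect]
        rw [← Finset.sum_neg_distrib]
        exact Finset.sum_congr rfl hrefl
      have h2S : (2 : K) * (∑ k ∈ Finset.range p, (t^k - (t⁻¹)^k) * (gsum p k)^n) = 0 := by
        linear_combination hS
      rcases mul_eq_zero.mp h2S with h | h
      · exact absurd h h2
      · exact h
    -- cast of D
    have hF0 : ((F : ℕ) : K) ≠ 0 := by
      rw [Ne, ZMod.natCast_eq_zero_iff, hF, hp.dvd_factorial]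
      omega
    have hDcast : ∀ k ∈ Finset.range p, ((D k : ℤ) : K) = ((F : ℕ) : K) * gsum p k := by
      intro k hk
      have hk' : k < p := Finset.mem_range.mp hk
      simp only [hDdef, Int.cast_sum, Int.cast_natCast]
      erw [Int.cast_sum]
      simp only [Int.cast_natCast]
      rw [gsum, Finset.mul_sum]
      refine Finset.sum_congr rfl fun i hi => ?_
      have hii : i < k := Finset.mem_range.mp hi
      have hdvd : (i+1) ∣ F := Nat.dvd_factorial (Nat.succ_pos i) (by omega)
      have hi0 : ((i : K) + 1) ≠ 0 := by
        have : (((i+1 : ℕ)) : K) ≠ 0 := by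
          rw [Ne, ZMod.natCast_eq_zero_iff]
          intro hdd
          exact absurd (Nat.le_of_dvd (Nat.succ_pos i) hdd) (by omega)
        simpa using this
      have hmul : (((F / (i+1) : ℕ)) : K) * ((i : K) + 1) = ((F : ℕ) : K) := by
        have : ((F / (i+1) : ℕ) * (i+1) : ℕ) = F := Nat.div_mul_cancel hdvd
        calc (((F / (i+1) : ℕ)) : K) * ((i : K) + 1)
            = (((F / (i+1) : ℕ) * (i+1) : ℕ) : K) := by erw [Nat.cast_mul, Nat.cast_succ]
          _ = ((F : ℕ) : K) := by rw [this]
      rw [eq_mul_inv_iff_mul_eq₀ hi0]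
      exact hmul
    -- main computation
    have main : ∀ k ∈ Finset.range p,
        ((b^(p-1) - b^(p-1-k)) * (α^k + β^k) * (((F : ℕ) : K) * gsum p k)^n)
        = b^(p-1) * ((F : ℕ) : K)^n * ((α^k - (α⁻¹)^k) * gsum p k ^ n)
          + b^(p-1) * ((F : ℕ) : K)^n * ((β^k - (β⁻¹)^k) * gsum p k ^ n) := by
      intro k hk
      have hk' : k < p := Finset.mem_range.mp hk
      have hbk : b^(p-1-k) = b^(p-1) * (b⁻¹)^k := by
        have hbk0 : b^k ≠ 0 := pow_ne_zero _ hb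
        rw [inv_pow, eq_mul_inv_iff_mul_eq₀ hbk0, ← pow_add,
          Nat.sub_add_cancel (by omega)]
      have hb1 : b⁻¹ * α = β⁻¹ := by
        rw [← hprod, mul_inv, mul_comm α⁻¹ β⁻¹, mul_assoc, inv_mul_cancel₀ hα, mul_one]
      have hb2 : b⁻¹ * β = α⁻¹ := by
        rw [← hprod, mul_inv, mul_assoc, inv_mul_cancel₀ hβ, mul_one]
      have e1 : (b⁻¹)^k * α^k = (β⁻¹)^k := by rw [← mul_pow, hb1]
      have e2 : (b⁻¹)^k * β^k = (α⁻¹)^k := by rw [← mul_pow, hb2]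
      rw [hbk, mul_pow]
      linear_combination (-(b^(p-1)) * (((F : ℕ) : K)^n * gsum p k ^ n)) * e1
        + (-(b^(p-1)) * (((F : ℕ) : K)^n * gsum p k ^ n)) * e2
    calc ((c : ℤ) : K)
        = ∑ k ∈ Finset.range p,
            ((b^(p-1) - b^(p-1-k)) * (α^k + β^k) * (((F : ℕ) : K) * gsum p k)^n) := by
          rw [hcdef]
          erw [Int.cast_sum]
          push_cast
          refine Finset.sum_congr rfl fun k hk => ?_
          rw [hLv k, hDcast k hk]
      _ = ∑ k ∈ Finset.range p,
            (b^(p-1) * ((F : ℕ) : K)^n * ((α^k - (α⁻¹)^k) * gsum p k ^ n)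
              + b^(p-1) * ((F : ℕ) : K)^n * ((β^k - (β⁻¹)^k) * gsum p k ^ n)) :=
          Finset.sum_congr rfl main
      _ = b^(p-1) * ((F : ℕ) : K)^n
            * (∑ k ∈ Finset.range p, (α^k - (α⁻¹)^k) * gsum p k ^ n)
          + b^(p-1) * ((F : ℕ) : K)^n
            * (∑ k ∈ Finset.range p, (β^k - (β⁻¹)^k) * gsum p k ^ n) := by
          rw [Finset.sum_add_distrib, Finset.mul_sum, Finset.mul_sum]
      _ = 0 := by rw [hT α hα, hT β hβ]; ring
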